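/- The function φ is strictly increasing and concave on [a,∞), satisfies φ(a) = a, is differentiable on (a,∞) with φ'(u) = 1/F̃(u), and φ(u) → ∞ as u → ∞ (equivalently ∫_a^∞ dt/F̃(t) = ∞); consequently φ is a bijection of [a,∞) onto itself. -/

import Mathlib

open Real MeasureTheory Filter Topology Set

/-- `F(u) = a - log a + log u`. -/
noncomputable def Fa (a : ℝ) : ℝ → ℝ := fun u => a - Real.log a + Real.log u

/-- `F̃(u) = a · ∏_{k=0}^∞ (F^k(u)/a)`. -/
noncomputable def Ftilde (a : ℝ) (u : ℝ) : ℝ := a * ∏' k : ℕ, ((Fa a)^[k] u / a)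

/-- `φ(u) = a + ∫_a^u dt / F̃(t)`. -/
noncomputable def phiFun (a : ℝ) (u : ℝ) : ℝ := a + ∫ t in a..u, 1 / Ftilde a t

/-- Sum of logs of the factors in the infinite product. -/
noncomputable def Sa (a u : ℝ) : ℝ := ∑' k : ℕ, Real.log ((Fa a)^[k] u / a)

/-- Inverse of `Fa`: `G(x) = a·exp(x-a)`. -/
noncomputable def Ga (a : ℝ) (x : ℝ) : ℝ := a * Real.exp (x - a)

section Aux

variable {a : ℝ} (ha : 1 < a)
include ha

lemma Fa_ge {u : ℝ} (hu : a ≤ u) : a ≤ Fa a u := by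
  have h0 : (0:ℝ) < a := by linarith
  have h := Real.log_le_log h0 hu
  simp only [Fa]; linarith

lemma Fa_mono {u v : ℝ} (hu : a ≤ u) (huv : u ≤ v) : Fa a u ≤ Fa a v := by
  have h0 : (0:ℝ) < u := by linarith
  have := Real.log_le_log h0 huv
  simp only [Fa]; linarith

lemma iter_ge (k : ℕ) {u : ℝ} (hu : a ≤ u) : a ≤ (Fa a)^[k] u := by
  induction k with
  | zero => simpa using hu
  | succ k ih => rw [Function.iterate_succ_apply']; exact Fa_ge ha ih

lemma iter_mono (k : ℕ) {u v : ℝ} (hu : a ≤ u) (huv : u ≤ v) :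
    (Fa a)^[k] u ≤ (Fa a)^[k] v := by
  induction k with
  | zero => simpa using huv
  | succ k ih =>
    rw [Function.iterate_succ_apply', Function.iterate_succ_apply']
    exact Fa_mono ha (iter_ge ha k hu) ih

lemma Fa_sub_le {u : ℝ} (hu : a ≤ u) : Fa a u - a ≤ (u - a) / a := by
  have h0 : (0:ℝ) < a := by linarith
  have hu0 : (0:ℝ) < u := by linarith
  have h1 : Real.log u - Real.log a = Real.log (u / a) := (Real.log_div hu0.ne' h0.ne').symm
  have h2 : Real.log (u / a) ≤ u / a - 1 :=
    Real.log_le_sub_one_of_pos (div_pos hu0 h0)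
  have h3 : u / a - 1 = (u - a) / a := by field_simp
  simp only [Fa]; linarith

lemma iter_sub_le (k : ℕ) {u : ℝ} (hu : a ≤ u) :
    (Fa a)^[k] u - a ≤ (u - a) / a ^ k := by
  have h0 : (0:ℝ) < a := by linarith
  induction k with
  | zero => simp
  | succ k ih =>
    rw [Function.iterate_succ_apply']
    have h1 := Fa_sub_le ha (iter_ge ha k hu)
    calc Fa a ((Fa a)^[k] u) - a ≤ ((Fa a)^[k] u - a) / a := h1
      _ ≤ ((u - a) / a ^ k) / a := by gcongr
      _ = (u - a) / a ^ (k + 1) := by rw [div_div, ← pow_succ]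

lemma logterm_nonneg (k : ℕ) {u : ℝ} (hu : a ≤ u) :
    0 ≤ Real.log ((Fa a)^[k] u / a) := by
  have h0 : (0:ℝ) < a := by linarith
  exact Real.log_nonneg ((one_le_div h0).mpr (iter_ge ha k hu))

lemma logterm_le (k : ℕ) {u : ℝ} (hu : a ≤ u) :
    Real.log ((Fa a)^[k] u / a) ≤ (u - a) / a ^ (k + 1) := by
  have h0 : (0:ℝ) < a := by linarith
  have hv : a ≤ (Fa a)^[k] u := iter_ge ha k hu
  have h1 : Real.log ((Fa a)^[k] u / a) ≤ (Fa a)^[k] u / a - 1 :=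
    Real.log_le_sub_one_of_pos (div_pos (by linarith) h0)
  have h2 : (Fa a)^[k] u / a - 1 = ((Fa a)^[k] u - a) / a := by field_simp
  have h3 : ((Fa a)^[k] u - a) / a ≤ ((u - a) / a ^ k) / a := by
    gcongr
    exact iter_sub_le ha k hu
  have h4 : ((u - a) / a ^ k) / a = (u - a) / a ^ (k + 1) := by
    rw [div_div, ← pow_succ]
  linarith

lemma summable_logterm {u : ℝ} (hu : a ≤ u) :
    Summable (fun k : ℕ => Real.log ((Fa a)^[k] u / a)) := by
  have h0 : (0:ℝ) < a := by linarith
  have hgeom : Summable (fun k : ℕ => ((u - a) / a) * (1 / a) ^ k) :=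
    (summable_geometric_of_lt_one (by positivity)
      (by rw [div_lt_one h0]; linarith)).mul_left _
  apply Summable.of_nonneg_of_le (fun k => logterm_nonneg ha k hu) (fun k => ?_) hgeom
  have := logterm_le ha k hu
  have heq : (u - a) / a ^ (k + 1) = ((u - a) / a) * (1 / a) ^ k := by
    rw [div_pow, one_pow, pow_succ]
    ring
  linarith [heq ▸ this]

lemma Ftilde_eq {u : ℝ} (hu : a ≤ u) : Ftilde a u = a * Real.exp (Sa a u) := by
  have h0 : (0:ℝ) < a := by linarith
  have hs := summable_logterm ha hu
  have hprod : HasProd (fun k : ℕ => Real.exp (Real.log ((Fa a)^[k] u / a)))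
      (Real.exp (Sa a u)) := hs.hasSum.rexp
  have heq : (fun k : ℕ => Real.exp (Real.log ((Fa a)^[k] u / a))) =
      fun k : ℕ => (Fa a)^[k] u / a := by
    funext k
    exact Real.exp_log (div_pos (by linarith [iter_ge ha k hu]) h0)
  rw [heq] at hprod
  rw [Ftilde, hprod.tprod_eq]

lemma Sa_ge {u : ℝ} (hu : a ≤ u) : Real.log (u / a) ≤ Sa a u := by
  have h := Summable.le_tsum (summable_logterm ha hu) 0 (fun j _ => logterm_nonneg ha j hu)
  simpa [Sa] using h

lemma Sa_nonneg {u : ℝ} (hu : a ≤ u) : 0 ≤ Sa a u := by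
  have h0 : (0:ℝ) < a := by linarith
  have := Sa_ge ha hu
  have h1 : 0 ≤ Real.log (u / a) := Real.log_nonneg ((one_le_div h0).mpr hu)
  linarith

lemma Ftilde_ge {u : ℝ} (hu : a ≤ u) : u ≤ Ftilde a u := by
  have h0 : (0:ℝ) < a := by linarith
  rw [Ftilde_eq ha hu]
  have h1 : Real.exp (Real.log (u / a)) ≤ Real.exp (Sa a u) :=
    Real.exp_le_exp.mpr (Sa_ge ha hu)
  rw [Real.exp_log (div_pos (by linarith) h0)] at h1
  calc u = a * (u / a) := by field_simp
    _ ≤ a * Real.exp (Sa a u) := by nlinarith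

lemma Ftilde_pos {u : ℝ} (hu : a ≤ u) : 0 < Ftilde a u :=
  lt_of_lt_of_le (by linarith) (Ftilde_ge ha hu)

lemma Sa_mono {u v : ℝ} (hu : a ≤ u) (huv : u ≤ v) : Sa a u ≤ Sa a v := by
  have h0 : (0:ℝ) < a := by linarith
  apply Summable.tsum_le_tsum _ (summable_logterm ha hu) (summable_logterm ha (hu.trans huv))
  intro k
  apply Real.log_le_log (div_pos (by linarith [iter_ge ha k hu]) h0)
  gcongr
  exact iter_mono ha k hu huv

lemma Ftilde_mono {u v : ℝ} (hu : a ≤ u) (huv : u ≤ v) : Ftilde a u ≤ Ftilde a v := by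
  rw [Ftilde_eq ha hu, Ftilde_eq ha (hu.trans huv)]
  have := Real.exp_le_exp.mpr (Sa_mono ha hu huv)
  nlinarith [Real.exp_pos (Sa a u)]

lemma iter_contOn (k : ℕ) : ContinuousOn (fun u => (Fa a)^[k] u) (Ici a) := by
  induction k with
  | zero => exact continuousOn_id
  | succ k ih =>
    have hFa : ContinuousOn (Fa a) (Ici a) := by
      intro x hx
      have hx0 : (0:ℝ) < x := lt_of_lt_of_le (by linarith) hx
      exact (continuousAt_const.add (Real.continuousAt_log hx0.ne')).continuousWithinAt
    have : (fun u => (Fa a)^[k+1] u) = (Fa a) ∘ (fun u => (Fa a)^[k] u) := by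
      funext u; exact Function.iterate_succ_apply' _ _ _
    rw [this]
    exact hFa.comp ih (fun u hu => iter_ge ha k hu)

lemma Sa_contOn : ContinuousOn (Sa a) (Ici a) := by
  intro x hx
  have h0 : (0:ℝ) < a := by linarith
  -- continuity on Icc a (x+1)
  have hsub : Icc a (x + 1) ⊆ Ici a := fun t ht => ht.1
  have hcont : ContinuousOn (Sa a) (Icc a (x + 1)) := by
    apply continuousOn_tsum (u := fun k : ℕ => ((x + 1 - a) / a) * (1 / a) ^ k)
    · intro k
      apply ContinuousOn.log
      · exact ((iter_contOn ha k).mono hsub).div_const a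
      · intro t ht
        have h1 := iter_ge ha k (hsub ht)
        have h2 : (0:ℝ) < (Fa a)^[k] t := by linarith
        positivity
    · exact (summable_geometric_of_lt_one (by positivity)
        (by rw [div_lt_one h0]; linarith)).mul_left _
    · intro k t ht
      rw [Real.norm_eq_abs, abs_of_nonneg (logterm_nonneg ha k (hsub ht))]
      have h1 := logterm_le ha k (hsub ht)
      have h2 : (t - a) / a ^ (k + 1) ≤ (x + 1 - a) / a ^ (k + 1) := by
        gcongr
        linarith [ht.2]
      have heq : (x + 1 - a) / a ^ (k + 1) = ((x + 1 - a) / a) * (1 / a) ^ k := by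
        rw [div_pow, one_pow, pow_succ]; ring
      linarith [heq ▸ h2]
  have hmem : Icc a (x + 1) ∈ 𝓝[Ici a] x := by
    rw [← Set.Ici_inter_Iic]
    exact inter_mem self_mem_nhdsWithin
      (mem_nhdsWithin_of_mem_nhds (Iic_mem_nhds (lt_add_one x)))
  exact (hcont x ⟨hx, by linarith [mem_Ici.mp hx]⟩).mono_of_mem_nhdsWithin hmem

lemma Ftilde_contOn : ContinuousOn (Ftilde a) (Ici a) := by
  exact (continuousOn_const.mul
    (Real.continuous_exp.comp_continuousOn (Sa_contOn ha))).congr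
    (fun u hu => Ftilde_eq ha hu)

lemma inv_contOn : ContinuousOn (fun t => 1 / Ftilde a t) (Ici a) :=
  continuousOn_const.div (Ftilde_contOn ha) (fun t ht => (Ftilde_pos ha ht).ne')

lemma integ {x y : ℝ} (hx : a ≤ x) (hy : a ≤ y) :
    IntervalIntegrable (fun t => 1 / Ftilde a t) volume x y := by
  apply ContinuousOn.intervalIntegrable
  apply (inv_contOn ha).mono
  intro t ht
  rcases Set.mem_uIcc.mp ht with h | h
  · exact le_trans hx h.1
  · exact le_trans hy h.1

lemma hmeasAt {x : ℝ} (hx : a ≤ x) (l : Filter ℝ) (hl : Ici a ∈ l) :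
    StronglyMeasurableAtFilter (fun t => 1 / Ftilde a t) l volume :=
  ⟨Ici a, hl, (inv_contOn ha).aestronglyMeasurable measurableSet_Ici⟩

lemma hderivWithin {x : ℝ} (hx : a ≤ x) :
    HasDerivWithinAt (phiFun a) (1 / Ftilde a x) (Ici x) x := by
  have h1 : HasDerivWithinAt (fun u => ∫ t in a..u, 1 / Ftilde a t)
      (1 / Ftilde a x) (Ici x) x := by
    apply intervalIntegral.integral_hasDerivWithinAt_right (integ ha le_rfl hx)
      (t := Ioi x)
    · exact hmeasAt ha hx _ (mem_of_superset self_mem_nhdsWithin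
        (fun t ht => le_trans hx (le_of_lt ht)))
    · exact ((inv_contOn ha) x hx).mono (fun t ht => le_trans hx (le_of_lt ht))
  exact h1.const_add a

lemma hderiv {u : ℝ} (hu : a < u) :
    HasDerivAt (phiFun a) (1 / Ftilde a u) u := by
  have h1 : HasDerivAt (fun v => ∫ t in a..v, 1 / Ftilde a t) (1 / Ftilde a u) u := by
    apply intervalIntegral.integral_hasDerivAt_right (integ ha le_rfl hu.le)
    · exact hmeasAt ha hu.le _ (Ici_mem_nhds hu)
    · exact ((inv_contOn ha) u hu.le).continuousAt (Ici_mem_nhds hu)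
  exact h1.const_add a

lemma phi_a : phiFun a a = a := by
  simp [phiFun]

lemma phi_contOn : ContinuousOn (phiFun a) (Ici a) := by
  intro x hx
  rcases eq_or_lt_of_le (mem_Ici.mp hx) with h | h
  · have := (hderivWithin ha le_rfl).continuousWithinAt
    exact h ▸ this
  · exact ((hderiv ha h).continuousAt).continuousWithinAt

lemma phi_smo : StrictMonoOn (phiFun a) (Ici a) := by
  intro x hx y hy hxy
  have hsplit : (∫ t in a..x, 1 / Ftilde a t) + (∫ t in x..y, 1 / Ftilde a t)
      = ∫ t in a..y, 1 / Ftilde a t :=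
    intervalIntegral.integral_add_adjacent_intervals (integ ha le_rfl hx) (integ ha hx hy)
  have hpos : 0 < ∫ t in x..y, 1 / Ftilde a t := by
    apply intervalIntegral.intervalIntegral_pos_of_pos_on (integ ha hx hy)
    · intro t ht
      exact one_div_pos.mpr (Ftilde_pos ha (le_trans hx ht.1.le))
    · exact hxy
  simp only [phiFun]
  linarith

-- G lemmas
lemma Ga_pos (x : ℝ) : 0 < Ga a x := by
  have h0 : (0:ℝ) < a := by linarith
  exact mul_pos h0 (Real.exp_pos _)

lemma Ga_ge_self {x : ℝ} (hx : a ≤ x) : x ≤ Ga a x := by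
  have h1 : x - a + 1 ≤ Real.exp (x - a) := Real.add_one_le_exp _
  have : a * (x - a + 1) ≤ a * Real.exp (x - a) := by nlinarith
  have h2 : x ≤ a * (x - a + 1) := by nlinarith
  simpa [Ga] using le_trans h2 this

lemma Ga_monotone : Monotone (Ga a) := by
  intro x y hxy
  have h0 : (0:ℝ) < a := by linarith
  exact mul_le_mul_of_nonneg_left (Real.exp_le_exp.mpr (by linarith)) h0.le

lemma Ga_a : Ga a a = a := by simp [Ga]

lemma Fa_Ga (x : ℝ) : Fa a (Ga a x) = x := by
  have h0 : (0:ℝ) < a := by linarith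
  simp only [Fa, Ga]
  rw [Real.log_mul h0.ne' (Real.exp_pos _).ne', Real.log_exp]
  ring

lemma Ga_hasDerivAt (x : ℝ) : HasDerivAt (Ga a) (Ga a x) x := by
  have h1 : HasDerivAt (fun y : ℝ => y - a) 1 x := (hasDerivAt_id x).sub_const a
  have h2 := h1.exp
  have h3 := h2.const_mul a
  show HasDerivAt (fun y => a * Real.exp (y - a)) (Ga a x) x
  simpa [Ga, mul_comm] using h3

lemma Sa_Ga {x : ℝ} (hx : a ≤ x) :
    Sa a (Ga a x) = Real.log (Ga a x / a) + Sa a x := by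
  have hGa : a ≤ Ga a x := le_trans hx (Ga_ge_self ha hx)
  have hs := summable_logterm ha hGa
  have h1 := Summable.tsum_eq_zero_add hs
  have h2 : ∀ k : ℕ, (Fa a)^[k + 1] (Ga a x) = (Fa a)^[k] x := by
    intro k
    rw [Function.iterate_succ_apply, Fa_Ga ha]
  simp only [Sa]
  rw [h1]
  simp only [Function.iterate_zero_apply, Function.iterate_succ_apply, Fa_Ga ha]

lemma Ftilde_Ga {x : ℝ} (hx : a ≤ x) :
    Ftilde a (Ga a x) = Ga a x * Ftilde a x / a := by
  have h0 : (0:ℝ) < a := by linarith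
  have hGa : a ≤ Ga a x := le_trans hx (Ga_ge_self ha hx)
  rw [Ftilde_eq ha hGa, Ftilde_eq ha hx, Sa_Ga ha hx, Real.exp_add,
    Real.exp_log (div_pos (Ga_pos ha x) h0)]
  field_simp

lemma phi_Ga {x : ℝ} (hx : a ≤ x) :
    phiFun a (Ga a x) = a * phiFun a x + (a - a * a) := by
  have h0 : (0:ℝ) < a := by linarith
  have key : ∀ y ∈ Icc a x, (phiFun a ∘ Ga a) y = (fun t => a * phiFun a t + (a - a * a)) y := by
    apply eq_of_has_deriv_right_eq (f' := fun t => a * (1 / Ftilde a t))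
    · intro t ht
      have ht1 : a ≤ t := ht.1
      have hGt : a ≤ Ga a t := le_trans ht1 (Ga_ge_self ha ht1)
      have hp : HasDerivWithinAt (phiFun a) (1 / Ftilde a (Ga a t)) (Ici (Ga a t)) (Ga a t) :=
        hderivWithin ha hGt
      have hG : HasDerivWithinAt (Ga a) (Ga a t) (Ici t) t :=
        (Ga_hasDerivAt ha t).hasDerivWithinAt
      have hmaps : MapsTo (Ga a) (Ici t) (Ici (Ga a t)) :=
        fun y hy => Ga_monotone ha hy
      have hcomp := hp.comp t hG hmaps
      have heq : 1 / Ftilde a (Ga a t) * Ga a t = a * (1 / Ftilde a t) := by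
        rw [Ftilde_Ga ha ht1]
        have h1 := Ga_pos ha t
        have h2 := Ftilde_pos ha ht1
        field_simp
      rwa [heq] at hcomp
    · intro t ht
      exact ((hderivWithin ha ht.1).const_mul a).add_const (a - a * a)
    · have hGc : Continuous (Ga a) :=
        continuous_const.mul (Real.continuous_exp.comp (continuous_id.sub continuous_const))
      apply (phi_contOn ha).comp hGc.continuousOn
      intro t ht
      calc a = Ga a a := (Ga_a ha).symm
        _ ≤ Ga a t := Ga_monotone ha ht.1
    · exact (continuousOn_const.mul ((phi_contOn ha).mono Icc_subset_Ici_self)).add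
        continuousOn_const
    · simp only [Function.comp_apply, Ga_a ha, phi_a ha]; ring
  have := key x ⟨hx, le_rfl⟩
  simpa [Function.comp] using this

lemma phi_tendsto : Tendsto (phiFun a) atTop atTop := by
  set c := phiFun a (a + 1) - a with hc
  have hc0 : 0 < c := by
    have h := phi_smo ha (self_mem_Ici) (by simp : a + 1 ∈ Ici a) (lt_add_one a)
    rw [phi_a ha] at h
    simp only [hc]; linarith
  have key : ∀ n : ℕ, a ≤ (Ga a)^[n] (a + 1) ∧
      phiFun a ((Ga a)^[n] (a + 1)) = a + a ^ n * c := by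
    intro n
    induction n with
    | zero =>
      refine ⟨by simp, ?_⟩
      simp only [Function.iterate_zero_apply, pow_zero, one_mul, hc]
      ring
    | succ n ih =>
      rw [Function.iterate_succ_apply']
      refine ⟨le_trans ih.1 (Ga_ge_self ha ih.1), ?_⟩
      rw [phi_Ga ha ih.1, ih.2, pow_succ]
      ring
  rw [tendsto_atTop]
  intro M
  have htend : Tendsto (fun n : ℕ => a + a ^ n * c) atTop atTop :=
    tendsto_atTop_add_const_left _ a
      ((tendsto_pow_atTop_atTop_of_one_lt ha).atTop_mul_const hc0)
  obtain ⟨n, hn⟩ := (htend.eventually_ge_atTop M).exists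
  filter_upwards [eventually_ge_atTop ((Ga a)^[n] (a + 1))] with u hu
  have h1 := (key n).1
  calc M ≤ phiFun a ((Ga a)^[n] (a + 1)) := by rw [(key n).2]; exact hn
    _ ≤ phiFun a u := (phi_smo ha).monotoneOn h1 (le_trans h1 hu) hu

end Aux

/-- `φ` is strictly increasing and concave on `[a,∞)`, `φ(a) = a`, `φ` is differentiable
on `(a,∞)` with `φ'(u) = 1/F̃(u)`, and `φ(u) → ∞` as `u → ∞`; consequently `φ` is a
bijection of `[a,∞)` onto itself. -/
theorem stmt3 (a : ℝ) (ha : 1 < a) :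
    StrictMonoOn (phiFun a) (Set.Ici a) ∧
    ConcaveOn ℝ (Set.Ici a) (phiFun a) ∧
    phiFun a a = a ∧
    (∀ u : ℝ, a < u → HasDerivAt (phiFun a) (1 / Ftilde a u) u) ∧
    Filter.Tendsto (phiFun a) Filter.atTop Filter.atTop ∧
    Set.BijOn (phiFun a) (Set.Ici a) (Set.Ici a) := by
  refine ⟨phi_smo ha, ?_, phi_a ha, fun u hu => hderiv ha hu, phi_tendsto ha, ?_, ?_, ?_⟩
  · -- concavity
    apply AntitoneOn.concaveOn_of_deriv (convex_Ici a) (phi_contOn ha)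
    · rw [interior_Ici]
      exact fun x hx => (hderiv ha hx).differentiableAt.differentiableWithinAt
    · rw [interior_Ici]
      intro x hx y hy hxy
      rw [(hderiv ha hx).deriv, (hderiv ha hy).deriv]
      apply one_div_le_one_div_of_le (Ftilde_pos ha hx.le)
      exact Ftilde_mono ha hx.le hxy
  · -- MapsTo
    intro u hu
    have := (phi_smo ha).monotoneOn self_mem_Ici hu hu
    rw [phi_a ha] at this
    exact this
  · -- InjOn
    exact (phi_smo ha).injOn
  · -- SurjOn
    intro y hy
    obtain ⟨b, hb1, hb2⟩ : ∃ b, a ≤ b ∧ y ≤ phiFun a b := by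
      have h := ((phi_tendsto ha).eventually_ge_atTop y).and (eventually_ge_atTop a)
      obtain ⟨b, h1, h2⟩ := h.exists
      exact ⟨b, h2, h1⟩
    have hIVT := intermediate_value_Icc hb1 ((phi_contOn ha).mono Icc_subset_Ici_self)
    have hy' : y ∈ Icc (phiFun a a) (phiFun a b) := by
      rw [phi_a ha]; exact ⟨hy, hb2⟩
    obtain ⟨u, hu, hyu⟩ := hIVT hy'
    exact ⟨u, hu.1, hyu⟩
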